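/- Let μ be a partition. Then in the Laurent polynomial ring ℤ[x1^{±1}, x2^{±1}] one has F_μ(x1,x2) = − Σ_{□∈μ} ( x1^{l(□)} · x2^{−a(□)−1} + x1^{−l(□)−1} · x2^{a(□)} ), where the sum runs over all cells □ of the Young diagram of μ. -/
import Mathlib


/-! Laurent polynomials in two variables `x1, x2` are modeled as the
group algebra `ℤ[ℤ × ℤ]`, where `Xm (m1, m2)` is the monomial `x1^m1 * x2^m2`. -/

noncomputable section

abbrev LaurentTwo : Type := AddMonoidAlgebra ℤ (ℤ × ℤ)

/-- The monomial `x1^m1 * x2^m2`. -/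
def Xm (m : ℤ × ℤ) : LaurentTwo := AddMonoidAlgebra.single m 1

/-- `Q_μ(x1,x2) = Σ_{(i,j) ∈ μ} x1^i x2^j`. -/
def Qmu (μ : YoungDiagram) : LaurentTwo :=
  ∑ c ∈ μ.cells, Xm ((c.1 : ℤ), (c.2 : ℤ))

/-- `Q̄_μ(x1,x2) = Q_μ(x1⁻¹, x2⁻¹)`. -/
def Qbar (μ : YoungDiagram) : LaurentTwo :=
  ∑ c ∈ μ.cells, Xm (-(c.1 : ℤ), -(c.2 : ℤ))

/-- `F_μ = −Q_μ − Q̄_μ/(x1 x2) + Q_μ Q̄_μ (1−x1)(1−x2)/(x1 x2)`. -/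
def Fmu (μ : YoungDiagram) : LaurentTwo :=
  - Qmu μ - Xm (-1, -1) * Qbar μ +
    Qmu μ * Qbar μ * ((1 - Xm (1, 0)) * (1 - Xm (0, 1)) * Xm (-1, -1))

/-- The arm length of a cell: the number of cells of `μ` strictly to the right in its row. -/
def armLen (μ : YoungDiagram) (c : ℕ × ℕ) : ℕ :=
  (μ.cells.filter (fun d => d.1 = c.1 ∧ c.2 < d.2)).card

/-- The leg length of a cell: the number of cells of `μ` strictly below it in its column. -/
def legLen (μ : YoungDiagram) (c : ℕ × ℕ) : ℕ :=
  (μ.cells.filter (fun d => d.2 = c.2 ∧ c.1 < d.1)).card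

namespace FmuAux
open Finset

/-- A filter of `range R` by a downward-closed predicate is an initial segment. -/
lemma filter_eq_range_card {p : ℕ → Prop} [DecidablePred p] {R : ℕ}
    (hp : ∀ i j, i ≤ j → p j → p i) :
    (range R).filter p = range (((range R).filter p).card) := by
  set s := (range R).filter p with hs
  ext a
  simp only [mem_range]
  constructor
  · intro ha
    have h1 : range (a + 1) ⊆ s := by
      intro b hb
      rw [mem_range] at hb
      have ha' := mem_filter.mp ha
      rw [hs, mem_filter, mem_range]
      exact ⟨lt_of_le_of_lt (Nat.lt_succ_iff.mp hb) (mem_range.mp ha'.1),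
        hp b a (Nat.lt_succ_iff.mp hb) ha'.2⟩
    calc a < a + 1 := Nat.lt_succ_self a
      _ = (range (a+1)).card := (card_range _).symm
      _ ≤ s.card := card_le_card h1
  · intro ha
    by_contra hc
    have hsub : s ⊆ range a := by
      intro b hb
      rw [mem_range]
      by_contra hb'
      push_neg at hb'
      have hb2 := mem_filter.mp hb
      exact hc (mem_filter.mpr ⟨mem_range.mpr (lt_of_le_of_lt hb' (mem_range.mp hb2.1)),
        hp a b hb' hb2.2⟩)
    have := card_le_card hsub
    rw [card_range] at this
    omega

lemma card_filter_Ico {p : ℕ → Prop} [DecidablePred p] (m n : ℕ) :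
    ((Ico m n).filter p).card = ((range (n - m)).filter (fun i => p (m + i))).card := by
  rw [card_filter, card_filter, sum_Ico_eq_sum_range]

/-- `u i`: number of `i' < i` with `lam i' ≤ lam i + q`. -/
def uu (lam : ℕ → ℕ) (q i : ℕ) : ℕ :=
  ((range i).filter (fun i' => lam i' ≤ lam i + q)).card

def ww (lam : ℕ → ℕ) (q R i : ℕ) : ℕ :=
  if q < lam i then ((Ico (i+1) R).filter (fun i' => lam i ≤ lam i' + q)).card
  else ((range i).filter (fun i' => lam i' ≤ q)).card

lemma key {M : Type*} [AddCommMonoid M] (f : ℕ → M) (q : ℕ) :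
    ∀ (R : ℕ) (lam : ℕ → ℕ), Antitone lam →
    ∑ i ∈ range R, f (ww lam q R i) = ∑ i ∈ range R, f (uu lam q i) := by
  intro R
  induction R with
  | zero => simp
  | succ R ih =>
    intro lam hlam
    by_cases h0 : lam 0 ≤ q
    · apply sum_congr rfl
      intro i _
      congr 1
      have hiq : lam i ≤ q := le_trans (hlam (Nat.zero_le i)) h0
      rw [ww, if_neg (by omega), uu]
      congr 1
      apply filter_congr
      intro i' hi'
      have : lam i' ≤ q := le_trans (hlam (Nat.zero_le i')) h0
      constructor <;> intro <;> omega
    · push_neg at h0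
      set lt' : ℕ → ℕ := fun i => lam (i + 1) with hlt'
      have hlt'anti : Antitone lt' := fun a b hab => hlam (by omega)
      set k := ((range R).filter (fun i => lam 0 ≤ lam (i+1) + q)).card with hk
      have hkR : k ≤ R := le_trans (card_filter_le _ _) (by rw [card_range])
      have hseteq := filter_eq_range_card (p := fun i => lam 0 ≤ lam (i+1) + q) (R := R)
          (fun a b hab hb => le_trans hb (by have := hlam (by omega : a + 1 ≤ b + 1); omega))
      have hmem : ∀ i, i < R → (lam 0 ≤ lam (i+1) + q ↔ i < k) := by
        intro i hiR
        constructor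
        · intro h
          have hmem2 : i ∈ (range R).filter (fun i => lam 0 ≤ lam (i+1) + q) :=
            mem_filter.mpr ⟨mem_range.mpr hiR, h⟩
          rw [hseteq] at hmem2
          exact mem_range.mp hmem2
        · intro h
          have hmem2 : i ∈ range k := mem_range.mpr h
          rw [hk] at hmem2; rw [← hseteq] at hmem2
          exact (mem_filter.mp hmem2).2
      have h_ww0 : ww lam q (R+1) 0 = k := by
        rw [ww, if_pos h0, hk, card_filter_Ico]
        rw [show R + 1 - (0 + 1) = R by omega]
        apply congrArg
        apply filter_congr
        intro i _
        rw [show 0 + 1 + i = i + 1 by omega]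
      have h_uu0 : uu lam q 0 = 0 := by simp [uu]
      have h_wws : ∀ i ∈ range R, ww lam q (R+1) (i+1) = ww lt' q R i := by
        intro i hi
        by_cases hq : q < lam (i+1)
        · rw [ww, if_pos hq, ww, if_pos (show q < lt' i from hq)]
          rw [card_filter_Ico, card_filter_Ico]
          rw [show R + 1 - (i + 1 + 1) = R - (i + 1) by omega]
          apply congrArg
          apply filter_congr
          intro j _
          rw [hlt', show i + 1 + 1 + j = (i + 1 + j) + 1 by omega]
        · rw [ww, if_neg hq, ww, if_neg (show ¬ q < lt' i from hq)]
          rw [card_filter, card_filter, Finset.sum_range_succ']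
          have hz : (if lam 0 ≤ q then (1:ℕ) else 0) = 0 := by
            rw [if_neg (by omega)]
          rw [hz, add_zero]
      have h_uus : ∀ i ∈ range R, uu lam q (i+1) = if i < k then i+1 else uu lt' q i := by
        intro i hi
        rw [mem_range] at hi
        rw [uu, card_filter, Finset.sum_range_succ']
        by_cases hik : i < k
        · rw [if_pos hik]
          have hp0 : lam 0 ≤ lam (i+1) + q := (hmem i hi).mpr hik
          rw [if_pos hp0]
          have hall : ∀ j ∈ range i, (if lam (j+1) ≤ lam (i+1) + q then (1:ℕ) else 0) = 1 := by
            intro j _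
            rw [if_pos (le_trans (hlam (Nat.zero_le (j+1))) hp0)]
          rw [Finset.sum_congr rfl hall]
          simp
        · rw [if_neg hik, if_neg (by rw [hmem i hi]; exact hik), add_zero, uu, card_filter]
      have h_uuk : ∀ i, i < k → uu lt' q i = i := by
        intro i hik
        have hp0 : lam 0 ≤ lam (i+1) + q := (hmem i (lt_of_lt_of_le hik hkR)).mpr hik
        rw [uu, filter_true_of_mem, card_range]
        intro j _
        exact le_trans (hlam (Nat.zero_le (j+1))) hp0
      rw [Finset.sum_range_succ' (fun i => f (ww lam q (R+1) i)) R,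
          Finset.sum_range_succ' (fun i => f (uu lam q i)) R]
      rw [h_ww0, h_uu0]
      have hL : ∑ i ∈ range R, f (ww lam q (R+1) (i+1)) = ∑ i ∈ range R, f (uu lt' q i) := by
        rw [sum_congr rfl (fun i hi => by rw [h_wws i hi])]
        exact ih lt' hlt'anti
      rw [hL]
      have hR2 : ∑ i ∈ range R, f (uu lam q (i+1))
          = ∑ i ∈ range R, f (if i < k then i+1 else uu lt' q i) :=
        sum_congr rfl (fun i hi => by rw [h_uus i hi])
      rw [hR2]
      rw [← Finset.sum_range_add_sum_Ico (fun i => f (uu lt' q i)) hkR,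
          ← Finset.sum_range_add_sum_Ico (fun i => f (if i < k then i+1 else uu lt' q i)) hkR]
      have e1 : ∑ i ∈ range k, f (uu lt' q i) = ∑ i ∈ range k, f i :=
        sum_congr rfl (fun i hi => by rw [h_uuk i (mem_range.mp hi)])
      have e2 : ∑ i ∈ range k, f (if i < k then i+1 else uu lt' q i) = ∑ i ∈ range k, f (i+1) :=
        sum_congr rfl (fun i hi => by rw [if_pos (mem_range.mp hi)])
      have e3 : ∑ i ∈ Ico k R, f (if i < k then i+1 else uu lt' q i)
          = ∑ i ∈ Ico k R, f (uu lt' q i) :=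
        sum_congr rfl (fun i hi => by rw [if_neg (by have := (mem_Ico.mp hi).1; omega)])
      rw [e1, e2, e3]
      have e4 : (∑ i ∈ range k, f i) + f k = (∑ i ∈ range k, f (i+1)) + f 0 := by
        rw [← Finset.sum_range_succ, Finset.sum_range_succ']
      calc (∑ i ∈ range k, f i) + (∑ i ∈ Ico k R, f (uu lt' q i)) + f k
          = ((∑ i ∈ range k, f i) + f k) + (∑ i ∈ Ico k R, f (uu lt' q i)) := by abel
        _ = ((∑ i ∈ range k, f (i+1)) + f 0) + (∑ i ∈ Ico k R, f (uu lt' q i)) := by rw [e4]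
        _ = (∑ i ∈ range k, f (i+1)) + (∑ i ∈ Ico k R, f (uu lt' q i)) + f 0 := by abel



lemma Xm_mul (a b : ℤ × ℤ) : Xm a * Xm b = Xm (a + b) := by
  simp [Xm, AddMonoidAlgebra.single_mul_single]

variable {M : Type*} [AddCommMonoid M]

lemma sum_cells_row (μ : YoungDiagram) (g : ℕ → ℕ → M) :
    ∑ c ∈ μ.cells, g c.1 c.2 = ∑ i ∈ range (μ.colLen 0), ∑ j ∈ range (μ.rowLen i), g i j := by
  rw [← Finset.sum_fiberwise_of_maps_to (g := Prod.fst) (t := range (μ.colLen 0))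
    (fun c hc => by
      rw [mem_range, ← YoungDiagram.mem_iff_lt_colLen]
      exact μ.up_left_mem le_rfl (Nat.zero_le c.2) ((YoungDiagram.mem_cells _).mp hc))]
  apply sum_congr rfl
  intro i _
  have hrow : μ.cells.filter (fun c => c.1 = i) = {i} ×ˢ range (μ.rowLen i) :=
    YoungDiagram.row_eq_prod (μ := μ) (i := i)
  rw [hrow, Finset.sum_product, Finset.sum_singleton]

lemma sum_cells_col (μ : YoungDiagram) (g : ℕ → ℕ → M) :
    ∑ c ∈ μ.cells, g c.1 c.2 = ∑ j ∈ range (μ.rowLen 0), ∑ i ∈ range (μ.colLen j), g i j := by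
  rw [← Finset.sum_fiberwise_of_maps_to (g := Prod.snd) (t := range (μ.rowLen 0))
    (fun c hc => by
      rw [mem_range, ← YoungDiagram.mem_iff_lt_rowLen]
      exact μ.up_left_mem (Nat.zero_le c.1) le_rfl ((YoungDiagram.mem_cells _).mp hc))]
  apply sum_congr rfl
  intro j _
  have hcol : μ.cells.filter (fun c => c.2 = j) = range (μ.colLen j) ×ˢ {j} :=
    YoungDiagram.col_eq_prod (μ := μ) (j := j)
  rw [hcol, Finset.sum_product]
  simp

lemma colLen_card (μ : YoungDiagram) (m : ℕ) :
    μ.colLen m = ((range (μ.colLen 0)).filter (fun i => m < μ.rowLen i)).card := by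
  have h : (range (μ.colLen 0)).filter (fun i => m < μ.rowLen i) = range (μ.colLen m) := by
    ext i
    simp only [mem_filter, mem_range, ← YoungDiagram.mem_iff_lt_rowLen,
      ← YoungDiagram.mem_iff_lt_colLen]
    constructor
    · exact fun h => h.2
    · intro h
      exact ⟨μ.up_left_mem le_rfl (Nat.zero_le m) h, h⟩
  rw [h, card_range]

lemma colLen_zero (μ : YoungDiagram) {m : ℕ} (h : μ.rowLen 0 ≤ m) : μ.colLen m = 0 := by
  by_contra hc
  have : (0, m) ∈ μ := YoungDiagram.mem_iff_lt_colLen.mpr (Nat.pos_of_ne_zero hc)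
  rw [YoungDiagram.mem_iff_lt_rowLen] at this
  omega

end FmuAux

namespace FmuAux
open Finset

lemma armLen_eq (μ : YoungDiagram) (i j : ℕ) :
    armLen μ (i, j) = μ.rowLen i - j - 1 := by
  rw [armLen]
  have h : μ.cells.filter (fun d => d.1 = i ∧ j < d.2) = {i} ×ˢ Ioo j (μ.rowLen i) := by
    ext ⟨a, b⟩
    simp only [mem_filter, YoungDiagram.mem_cells, mem_product, mem_singleton, mem_Ioo]
    constructor
    · rintro ⟨hab, rfl, hjb⟩
      exact ⟨rfl, hjb, YoungDiagram.mem_iff_lt_rowLen.mp hab⟩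
    · rintro ⟨rfl, hjb, hb⟩
      exact ⟨YoungDiagram.mem_iff_lt_rowLen.mpr hb, rfl, hjb⟩
  rw [h, card_product, card_singleton, one_mul, Nat.card_Ioo]

lemma legLen_eq (μ : YoungDiagram) (i j : ℕ) :
    legLen μ (i, j) = μ.colLen j - i - 1 := by
  rw [legLen]
  have h : μ.cells.filter (fun d => d.2 = j ∧ i < d.1) = Ioo i (μ.colLen j) ×ˢ {j} := by
    ext ⟨a, b⟩
    simp only [mem_filter, YoungDiagram.mem_cells, mem_product, mem_singleton, mem_Ioo]
    constructor
    · rintro ⟨hab, rfl, hia⟩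
      exact ⟨⟨hia, YoungDiagram.mem_iff_lt_colLen.mp hab⟩, rfl⟩
    · rintro ⟨⟨hia, ha⟩, rfl⟩
      exact ⟨YoungDiagram.mem_iff_lt_colLen.mpr ha, rfl, hia⟩
  rw [h, card_product, card_singleton, mul_one, Nat.card_Ioo]

end FmuAux

namespace FmuAux
open Finset

lemma filter_card_restrict {p : ℕ → Prop} [DecidablePred p] {i R : ℕ} (hiR : i ≤ R)
    (hp : ∀ i', i ≤ i' → ¬ p i') :
    ((range R).filter p).card = ((range i).filter p).card := by
  congr 1
  ext a
  simp only [mem_filter, mem_range]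
  constructor
  · rintro ⟨haR, hpa⟩
    refine ⟨?_, hpa⟩
    by_contra hai
    exact hp a (by omega) hpa
  · rintro ⟨hai, hpa⟩
    exact ⟨by omega, hpa⟩

lemma U_eq (μ : YoungDiagram) (q i : ℕ) (hi : i < μ.colLen 0) :
    μ.colLen (μ.rowLen i + q) + uu μ.rowLen q i = i := by
  rw [colLen_card, uu]
  rw [filter_card_restrict (i := i) (le_of_lt hi)
      (fun i' hii' h => by have := μ.rowLen_anti i i' hii'; omega)]
  have hcongr : (range i).filter (fun i' => μ.rowLen i' ≤ μ.rowLen i + q)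
      = (range i).filter (fun i' => ¬ (μ.rowLen i + q < μ.rowLen i')) := by
    apply filter_congr; intro a _; constructor <;> intro <;> omega
  rw [hcongr, Finset.card_filter_add_card_filter_not, card_range]

lemma W2_eq (μ : YoungDiagram) (q i : ℕ) (hq : μ.rowLen i ≤ q) (hi : i < μ.colLen 0) :
    ((range i).filter (fun i' => μ.rowLen i' ≤ q)).card + μ.colLen q = i := by
  rw [colLen_card]
  rw [filter_card_restrict (i := i) (le_of_lt hi)
      (fun i' hii' h => by have := μ.rowLen_anti i i' hii'; omega)]
  have hcongr : (range i).filter (fun i' => μ.rowLen i' ≤ q)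
      = (range i).filter (fun i' => ¬ (q < μ.rowLen i')) := by
    apply filter_congr; intro a _; constructor <;> intro <;> omega
  rw [hcongr, add_comm, Finset.card_filter_add_card_filter_not, card_range]

lemma W1_eq (μ : YoungDiagram) (q i : ℕ) (hq : q < μ.rowLen i) (hi : i < μ.colLen 0) :
    μ.colLen (μ.rowLen i - 1 - q)
      = (i + 1) + ((Ico (i+1) (μ.colLen 0)).filter
          (fun i' => μ.rowLen i ≤ μ.rowLen i' + q)).card := by
  rw [colLen_card]
  have hcongr : (range (μ.colLen 0)).filter (fun i' => μ.rowLen i - 1 - q < μ.rowLen i')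
      = (range (μ.colLen 0)).filter (fun i' => μ.rowLen i ≤ μ.rowLen i' + q) := by
    apply filter_congr; intro a _; constructor <;> intro <;> omega
  rw [hcongr, card_filter, ← Finset.sum_range_add_sum_Ico _ (show i + 1 ≤ μ.colLen 0 by omega)]
  have h1 : ∑ i' ∈ range (i+1), (if μ.rowLen i ≤ μ.rowLen i' + q then (1:ℕ) else 0) = i + 1 := by
    rw [Finset.sum_congr rfl (fun i' hi' => if_pos (by
      have := μ.rowLen_anti i' i (Nat.lt_succ_iff.mp (mem_range.mp hi')); omega))]
    simp
  rw [h1, ← card_filter]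

end FmuAux

namespace FmuAux
open Finset

lemma Xm_fst {a b c : ℤ} (h : a = b) : Xm (a, c) = Xm (b, c) := by rw [h]

lemma rowLen_antitone (μ : YoungDiagram) : Antitone μ.rowLen := fun a b h => μ.rowLen_anti a b h

lemma lt_colLen_iff (μ : YoungDiagram) {i q : ℕ} : i < μ.colLen q ↔ q < μ.rowLen i := by
  rw [← YoungDiagram.mem_iff_lt_colLen, YoungDiagram.mem_iff_lt_rowLen]

lemma bridgeA (μ : YoungDiagram) (q : ℕ) :
    (∑ i ∈ range (μ.colLen q), Xm ((μ.colLen (μ.rowLen i - 1 - q) : ℤ) - i - 1, -(q:ℤ)-1))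
      + ∑ i ∈ Ico (μ.colLen q) (μ.colLen 0), Xm ((i:ℤ) - μ.colLen q, -(q:ℤ)-1)
    = ∑ i ∈ range (μ.colLen 0),
        Xm (((ww μ.rowLen q (μ.colLen 0) i : ℕ) : ℤ), -(q:ℤ)-1) := by
  rw [← Finset.sum_range_add_sum_Ico _ (μ.colLen_anti 0 q (Nat.zero_le q))]
  congr 1
  · apply sum_congr rfl
    intro i hi
    rw [mem_range] at hi
    have hq : q < μ.rowLen i := (lt_colLen_iff μ).mp hi
    have hiR : i < μ.colLen 0 := lt_of_lt_of_le hi (μ.colLen_anti 0 q (Nat.zero_le q))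
    rw [ww, if_pos hq]
    apply Xm_fst
    have h := W1_eq μ q i hq hiR
    push_cast
    omega
  · apply sum_congr rfl
    intro i hi
    rw [mem_Ico] at hi
    have hq : μ.rowLen i ≤ q := by
      have := (lt_colLen_iff μ (i := i) (q := q))
      omega
    rw [ww, if_neg (by omega)]
    apply Xm_fst
    have h := W2_eq μ q i hq hi.2
    push_cast
    omega

lemma bridgeB (μ : YoungDiagram) (q : ℕ) :
    ∑ i ∈ range (μ.colLen 0), Xm ((i:ℤ) - μ.colLen (μ.rowLen i + q), -(q:ℤ)-1)
    = ∑ i ∈ range (μ.colLen 0), Xm (((uu μ.rowLen q i : ℕ) : ℤ), -(q:ℤ)-1) := by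
  apply sum_congr rfl
  intro i hi
  rw [mem_range] at hi
  apply Xm_fst
  have h := U_eq μ q i hi
  push_cast
  omega

lemma bridge (μ : YoungDiagram) (q : ℕ) :
    (∑ i ∈ range (μ.colLen q), Xm ((μ.colLen (μ.rowLen i - 1 - q) : ℤ) - i - 1, -(q:ℤ)-1))
      + ∑ i ∈ Ico (μ.colLen q) (μ.colLen 0), Xm ((i:ℤ) - μ.colLen q, -(q:ℤ)-1)
    = ∑ i ∈ range (μ.colLen 0), Xm ((i:ℤ) - μ.colLen (μ.rowLen i + q), -(q:ℤ)-1) := by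
  rw [bridgeA, bridgeB]
  exact key (fun p => Xm ((p : ℤ), -(q:ℤ)-1)) q (μ.colLen 0) μ.rowLen (rowLen_antitone μ)

end FmuAux

namespace FmuAux
open Finset

lemma Xm_pair {a b c d : ℤ} (h1 : a = c) (h2 : b = d) : Xm (a, b) = Xm (c, d) := by
  rw [h1, h2]

lemma Xm_mul_one_sub (a b : ℤ × ℤ) : Xm a * (1 - Xm b) = Xm a - Xm (a + b) := by
  rw [mul_sub, mul_one, Xm_mul]

lemma step_Q (μ : YoungDiagram) :
    Qmu μ * (1 - Xm (0, 1))
      = ∑ i ∈ range (μ.colLen 0), (Xm ((i:ℤ), 0) - Xm ((i:ℤ), (μ.rowLen i : ℤ))) := by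
  have hQ : Qmu μ = ∑ i ∈ range (μ.colLen 0), ∑ j ∈ range (μ.rowLen i), Xm ((i:ℤ), (j:ℤ)) :=
    sum_cells_row μ (fun i j => Xm ((i:ℤ), (j:ℤ)))
  rw [hQ, Finset.sum_mul]
  apply sum_congr rfl
  intro i _
  rw [Finset.sum_mul]
  have hterm : ∀ j ∈ range (μ.rowLen i), Xm ((i:ℤ), (j:ℤ)) * (1 - Xm (0, 1))
      = (fun j : ℕ => Xm ((i:ℤ), (j:ℤ))) j - (fun j : ℕ => Xm ((i:ℤ), (j:ℤ))) (j+1) := by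
    intro j _
    rw [Xm_mul_one_sub, Prod.mk_add_mk]
    push_cast
    ring_nf
  rw [sum_congr rfl hterm, Finset.sum_range_sub' (fun j : ℕ => Xm ((i:ℤ), (j:ℤ)))]
  norm_num

lemma step_Qbar (μ : YoungDiagram) :
    Qbar μ * (1 - Xm (1, 0))
      = ∑ j ∈ range (μ.rowLen 0),
          (Xm (1 - (μ.colLen j : ℤ), -(j:ℤ)) - Xm (1, -(j:ℤ))) := by
  have hQ : Qbar μ = ∑ j ∈ range (μ.rowLen 0), ∑ i ∈ range (μ.colLen j),
      Xm (-(i:ℤ), -(j:ℤ)) :=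
    sum_cells_col μ (fun i j => Xm (-(i:ℤ), -(j:ℤ)))
  rw [hQ, Finset.sum_mul]
  apply sum_congr rfl
  intro j _
  rw [Finset.sum_mul]
  have hterm : ∀ i ∈ range (μ.colLen j), Xm (-(i:ℤ), -(j:ℤ)) * (1 - Xm (1, 0))
      = (fun i : ℕ => Xm (1 - (i:ℤ), -(j:ℤ))) (i+1) - (fun i : ℕ => Xm (1 - (i:ℤ), -(j:ℤ))) i := by
    intro i _
    rw [Xm_mul_one_sub, Prod.mk_add_mk]
    push_cast
    ring_nf
  rw [sum_congr rfl hterm, Finset.sum_range_sub (fun i : ℕ => Xm (1 - (i:ℤ), -(j:ℤ)))]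
  norm_num

end FmuAux

namespace FmuAux
open Finset

lemma expand_term (a r b c : ℤ) :
    Xm (-1,-1) * ((Xm (a, 0) - Xm (a, r)) * (Xm (1 - c, -b) - Xm (1, -b)))
    = Xm (a - c, -b-1) - Xm (a, -b-1) - Xm (a - c, r - b - 1) + Xm (a, r - b - 1) := by
  simp only [mul_sub, sub_mul, Xm_mul, Prod.mk_add_mk]
  ring_nf

lemma hT1 (μ : YoungDiagram) :
    ∑ i ∈ range (μ.colLen 0), ∑ j ∈ range (μ.rowLen 0), Xm ((i:ℤ) - μ.colLen j, -(j:ℤ)-1)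
      = Xm (-1,-1) * Qbar μ
        + ∑ q ∈ range (μ.rowLen 0), ∑ i ∈ Ico (μ.colLen q) (μ.colLen 0),
            Xm ((i:ℤ) - μ.colLen q, -(q:ℤ)-1) := by
  rw [Finset.sum_comm]
  have hsplit : ∀ j ∈ range (μ.rowLen 0),
      ∑ i ∈ range (μ.colLen 0), Xm ((i:ℤ) - μ.colLen j, -(j:ℤ)-1)
      = (∑ i ∈ range (μ.colLen j), Xm (-(i:ℤ)-1, -(j:ℤ)-1))
        + ∑ i ∈ Ico (μ.colLen j) (μ.colLen 0), Xm ((i:ℤ) - μ.colLen j, -(j:ℤ)-1) := by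
    intro j _
    rw [← Finset.sum_range_add_sum_Ico _ (μ.colLen_anti 0 j (Nat.zero_le j))]
    congr 1
    rw [← Finset.sum_range_reflect (fun i : ℕ => Xm ((i:ℤ) - μ.colLen j, -(j:ℤ)-1)) (μ.colLen j)]
    apply sum_congr rfl
    intro i hi
    rw [mem_range] at hi
    exact (Xm_pair (by push_cast; omega) rfl).symm
  rw [sum_congr rfl hsplit, Finset.sum_add_distrib]
  congr 1
  have hQ : Qbar μ = ∑ j ∈ range (μ.rowLen 0), ∑ i ∈ range (μ.colLen j),
      Xm (-(i:ℤ), -(j:ℤ)) :=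
    sum_cells_col μ (fun i j => Xm (-(i:ℤ), -(j:ℤ)))
  rw [hQ, Finset.mul_sum]
  apply sum_congr rfl; intro j _
  rw [Finset.mul_sum]
  apply sum_congr rfl; intro i _
  rw [Xm_mul, Prod.mk_add_mk]
  exact Xm_pair (by ring) (by ring)

lemma hT4 (μ : YoungDiagram) :
    ∑ i ∈ range (μ.colLen 0), ∑ j ∈ range (μ.rowLen 0), Xm ((i:ℤ), (μ.rowLen i:ℤ)-j-1)
      = Qmu μ + ∑ i ∈ range (μ.colLen 0), ∑ j ∈ range (μ.rowLen 0 - μ.rowLen i),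
          Xm ((i:ℤ), -(j:ℤ)-1) := by
  have hQ : Qmu μ = ∑ i ∈ range (μ.colLen 0), ∑ j ∈ range (μ.rowLen i), Xm ((i:ℤ), (j:ℤ)) :=
    sum_cells_row μ (fun i j => Xm ((i:ℤ), (j:ℤ)))
  rw [hQ, ← Finset.sum_add_distrib]
  apply sum_congr rfl
  intro i _
  rw [← Finset.sum_range_add_sum_Ico _ (μ.rowLen_anti 0 i (Nat.zero_le i))]
  congr 1
  · rw [← Finset.sum_range_reflect (fun j : ℕ => Xm ((i:ℤ), (μ.rowLen i:ℤ)-j-1)) (μ.rowLen i)]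
    apply sum_congr rfl
    intro j hj
    rw [mem_range] at hj
    exact Xm_pair rfl (by push_cast; omega)
  · rw [Finset.sum_Ico_eq_sum_range]
    apply sum_congr rfl
    intro j _
    exact Xm_pair rfl (by push_cast; ring)

lemma hT2 (μ : YoungDiagram) :
    ∑ i ∈ range (μ.colLen 0), ∑ j ∈ range (μ.rowLen 0), Xm ((i:ℤ), -(j:ℤ)-1)
      = (∑ i ∈ range (μ.colLen 0), ∑ j ∈ range (μ.rowLen 0 - μ.rowLen i), Xm ((i:ℤ), -(j:ℤ)-1))
        + ∑ i ∈ range (μ.colLen 0), ∑ j ∈ Ico (μ.rowLen 0 - μ.rowLen i) (μ.rowLen 0),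
            Xm ((i:ℤ), -(j:ℤ)-1) := by
  rw [← Finset.sum_add_distrib]
  apply sum_congr rfl
  intro i _
  rw [← Finset.sum_range_add_sum_Ico _ (Nat.sub_le (μ.rowLen 0) (μ.rowLen i))]

lemma hT3 (μ : YoungDiagram) :
    ∑ i ∈ range (μ.colLen 0), ∑ j ∈ range (μ.rowLen 0), Xm ((i:ℤ) - μ.colLen j, (μ.rowLen i:ℤ)-j-1)
      = (∑ i ∈ range (μ.colLen 0), ∑ j ∈ range (μ.rowLen i),
            Xm ((i:ℤ) - μ.colLen j, (μ.rowLen i:ℤ)-j-1))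
        + ∑ i ∈ range (μ.colLen 0), ∑ j ∈ Ico (μ.rowLen i) (μ.rowLen 0),
            Xm ((i:ℤ) - μ.colLen j, (μ.rowLen i:ℤ)-j-1) := by
  rw [← Finset.sum_add_distrib]
  apply sum_congr rfl
  intro i _
  rw [← Finset.sum_range_add_sum_Ico _ (μ.rowLen_anti 0 i (Nat.zero_le i))]

lemma hH (μ : YoungDiagram) :
    (∑ q ∈ range (μ.rowLen 0), ∑ i ∈ Ico (μ.colLen q) (μ.colLen 0),
        Xm ((i:ℤ) - μ.colLen q, -(q:ℤ)-1))
      + ∑ i ∈ range (μ.colLen 0), ∑ j ∈ range (μ.rowLen i),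
          Xm ((μ.colLen j:ℤ)-i-1, (j:ℤ)-μ.rowLen i)
      = (∑ i ∈ range (μ.colLen 0), ∑ j ∈ Ico (μ.rowLen 0 - μ.rowLen i) (μ.rowLen 0),
            Xm ((i:ℤ), -(j:ℤ)-1))
        + ∑ i ∈ range (μ.colLen 0), ∑ j ∈ Ico (μ.rowLen i) (μ.rowLen 0),
            Xm ((i:ℤ) - μ.colLen j, (μ.rowLen i:ℤ)-j-1) := by
  -- Left side: rewrite the cells sum by reflecting each row and regrouping by columns.
  have hSL : ∑ i ∈ range (μ.colLen 0), ∑ j ∈ range (μ.rowLen i),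
        Xm ((μ.colLen j:ℤ)-i-1, (j:ℤ)-μ.rowLen i)
      = ∑ q ∈ range (μ.rowLen 0), ∑ i ∈ range (μ.colLen q),
          Xm ((μ.colLen (μ.rowLen i - 1 - q):ℤ)-i-1, -(q:ℤ)-1) := by
    have h1 : ∀ i ∈ range (μ.colLen 0),
        ∑ j ∈ range (μ.rowLen i), Xm ((μ.colLen j:ℤ)-i-1, (j:ℤ)-μ.rowLen i)
        = ∑ q ∈ range (μ.rowLen i), Xm ((μ.colLen (μ.rowLen i - 1 - q):ℤ)-i-1, -(q:ℤ)-1) := by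
      intro i _
      rw [← Finset.sum_range_reflect
        (fun j : ℕ => Xm ((μ.colLen j:ℤ)-i-1, (j:ℤ)-μ.rowLen i)) (μ.rowLen i)]
      apply sum_congr rfl
      intro q hq
      rw [mem_range] at hq
      exact Xm_pair rfl (by push_cast; omega)
    rw [sum_congr rfl h1]
    rw [← sum_cells_row μ (fun i q => Xm ((μ.colLen (μ.rowLen i - 1 - q):ℤ)-i-1, -(q:ℤ)-1))]
    exact sum_cells_col μ (fun i q => Xm ((μ.colLen (μ.rowLen i - 1 - q):ℤ)-i-1, -(q:ℤ)-1))
  rw [hSL, add_comm, ← Finset.sum_add_distrib]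
  have hLHS : ∀ q ∈ range (μ.rowLen 0),
      (∑ i ∈ range (μ.colLen q), Xm ((μ.colLen (μ.rowLen i - 1 - q):ℤ)-i-1, -(q:ℤ)-1))
        + ∑ i ∈ Ico (μ.colLen q) (μ.colLen 0), Xm ((i:ℤ) - μ.colLen q, -(q:ℤ)-1)
      = ∑ i ∈ range (μ.colLen 0), Xm ((i:ℤ) - μ.colLen (μ.rowLen i + q), -(q:ℤ)-1) :=
    fun q _ => bridge μ q
  rw [sum_congr rfl hLHS]
  -- Right side
  have hRHS : ∀ i ∈ range (μ.colLen 0),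
      (∑ j ∈ Ico (μ.rowLen 0 - μ.rowLen i) (μ.rowLen 0), Xm ((i:ℤ), -(j:ℤ)-1))
        + ∑ j ∈ Ico (μ.rowLen i) (μ.rowLen 0), Xm ((i:ℤ) - μ.colLen j, (μ.rowLen i:ℤ)-j-1)
      = ∑ q ∈ range (μ.rowLen 0), Xm ((i:ℤ) - μ.colLen (μ.rowLen i + q), -(q:ℤ)-1) := by
    intro i hi
    have e1 : ∑ j ∈ Ico (μ.rowLen 0 - μ.rowLen i) (μ.rowLen 0), Xm ((i:ℤ), -(j:ℤ)-1)
        = ∑ j ∈ Ico (μ.rowLen 0 - μ.rowLen i) (μ.rowLen 0),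
            Xm ((i:ℤ) - μ.colLen (μ.rowLen i + j), -(j:ℤ)-1) := by
      apply sum_congr rfl
      intro j hj
      rw [mem_Ico] at hj
      have hj2 : μ.rowLen 0 ≤ μ.rowLen i + j := by
        have := μ.rowLen_anti 0 i (Nat.zero_le i); omega
      rw [colLen_zero μ hj2]
      exact Xm_pair (by push_cast; ring) rfl
    have e2 : ∑ j ∈ Ico (μ.rowLen i) (μ.rowLen 0), Xm ((i:ℤ) - μ.colLen j, (μ.rowLen i:ℤ)-j-1)
        = ∑ j ∈ range (μ.rowLen 0 - μ.rowLen i),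
            Xm ((i:ℤ) - μ.colLen (μ.rowLen i + j), -(j:ℤ)-1) := by
      rw [Finset.sum_Ico_eq_sum_range]
      apply sum_congr rfl
      intro j _
      exact Xm_pair rfl (by push_cast; ring)
    rw [e1, e2, add_comm,
      Finset.sum_range_add_sum_Ico (fun j : ℕ => Xm ((i:ℤ) - μ.colLen (μ.rowLen i + j), -(j:ℤ)-1))
        (Nat.sub_le (μ.rowLen 0) (μ.rowLen i))]
  rw [← Finset.sum_add_distrib, sum_congr rfl hRHS]
  exact Finset.sum_comm

end FmuAux

namespace FmuAux
open Finset

lemma sum_cells_row' {M : Type*} [AddCommMonoid M] (μ : YoungDiagram) (g : ℕ × ℕ → M) :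
    ∑ c ∈ μ.cells, g c
      = ∑ i ∈ range (μ.colLen 0), ∑ j ∈ range (μ.rowLen i), g (i, j) :=
  sum_cells_row μ (fun i j => g (i, j))

end FmuAux


/-- **Lemma (arms & legs).**
`F_μ(x1,x2) = − Σ_{□∈μ} (x1^{l(□)} x2^{−a(□)−1} + x1^{−l(□)−1} x2^{a(□)})`. -/
theorem Fmu_eq_sum_arms_legs (μ : YoungDiagram) :
    Fmu μ = - ∑ c ∈ μ.cells,
      (Xm ((legLen μ c : ℤ), -(armLen μ c : ℤ) - 1) +
        Xm (-(legLen μ c : ℤ) - 1, (armLen μ c : ℤ))) := by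
  classical
  have h3 : Fmu μ = -Qmu μ - Xm (-1,-1) * Qbar μ
      + Xm (-1,-1) * ((Qmu μ * (1 - Xm (0,1))) * (Qbar μ * (1 - Xm (1,0)))) := by
    rw [Fmu]; ring
  have h5 : ∀ i ∈ Finset.range (μ.colLen 0), ∀ j ∈ Finset.range (μ.rowLen 0),
      Xm (-1,-1) * ((Xm ((i:ℤ), 0) - Xm ((i:ℤ), (μ.rowLen i:ℤ))) *
        (Xm (1 - (μ.colLen j:ℤ), -(j:ℤ)) - Xm (1, -(j:ℤ))))
      = Xm ((i:ℤ) - μ.colLen j, -(j:ℤ)-1) - Xm ((i:ℤ), -(j:ℤ)-1)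
        - Xm ((i:ℤ) - μ.colLen j, (μ.rowLen i:ℤ)-(j:ℤ)-1)
        + Xm ((i:ℤ), (μ.rowLen i:ℤ)-(j:ℤ)-1) :=
    fun i _ j _ => FmuAux.expand_term (i:ℤ) ((μ.rowLen i:ℕ):ℤ) (j:ℤ) ((μ.colLen j:ℕ):ℤ)
  have h4 : Xm (-1,-1) * ((Qmu μ * (1 - Xm (0,1))) * (Qbar μ * (1 - Xm (1,0))))
      = (∑ i ∈ Finset.range (μ.colLen 0), ∑ j ∈ Finset.range (μ.rowLen 0),
            Xm ((i:ℤ) - μ.colLen j, -(j:ℤ)-1))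
        - (∑ i ∈ Finset.range (μ.colLen 0), ∑ j ∈ Finset.range (μ.rowLen 0),
            Xm ((i:ℤ), -(j:ℤ)-1))
        - (∑ i ∈ Finset.range (μ.colLen 0), ∑ j ∈ Finset.range (μ.rowLen 0),
            Xm ((i:ℤ) - μ.colLen j, (μ.rowLen i:ℤ)-(j:ℤ)-1))
        + (∑ i ∈ Finset.range (μ.colLen 0), ∑ j ∈ Finset.range (μ.rowLen 0),
            Xm ((i:ℤ), (μ.rowLen i:ℤ)-(j:ℤ)-1)) := by
    calc Xm (-1,-1) * ((Qmu μ * (1 - Xm (0,1))) * (Qbar μ * (1 - Xm (1,0))))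
        = ∑ i ∈ Finset.range (μ.colLen 0), ∑ j ∈ Finset.range (μ.rowLen 0),
            Xm (-1,-1) * ((Xm ((i:ℤ), 0) - Xm ((i:ℤ), (μ.rowLen i:ℤ))) *
              (Xm (1 - (μ.colLen j:ℤ), -(j:ℤ)) - Xm (1, -(j:ℤ)))) := by
          rw [FmuAux.step_Q μ, FmuAux.step_Qbar μ, Finset.sum_mul_sum, Finset.mul_sum]
          apply Finset.sum_congr rfl
          intro i _
          rw [Finset.mul_sum]
      _ = ∑ i ∈ Finset.range (μ.colLen 0), ∑ j ∈ Finset.range (μ.rowLen 0),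
            (Xm ((i:ℤ) - μ.colLen j, -(j:ℤ)-1) - Xm ((i:ℤ), -(j:ℤ)-1)
              - Xm ((i:ℤ) - μ.colLen j, (μ.rowLen i:ℤ)-(j:ℤ)-1)
              + Xm ((i:ℤ), (μ.rowLen i:ℤ)-(j:ℤ)-1)) := by
          apply Finset.sum_congr rfl
          intro i hi
          exact Finset.sum_congr rfl (h5 i hi)
      _ = _ := by
          simp only [Finset.sum_sub_distrib, Finset.sum_add_distrib]
  have hRHS : (∑ c ∈ μ.cells,
        (Xm ((legLen μ c : ℤ), -(armLen μ c : ℤ) - 1)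
          + Xm (-(legLen μ c : ℤ) - 1, (armLen μ c : ℤ))))
      = (∑ i ∈ Finset.range (μ.colLen 0), ∑ j ∈ Finset.range (μ.rowLen i),
            Xm ((μ.colLen j:ℤ)-i-1, (j:ℤ)-μ.rowLen i))
        + ∑ i ∈ Finset.range (μ.colLen 0), ∑ j ∈ Finset.range (μ.rowLen i),
            Xm ((i:ℤ)-μ.colLen j, (μ.rowLen i:ℤ)-j-1) := by
    rw [FmuAux.sum_cells_row' μ (fun c =>
      Xm ((legLen μ c : ℤ), -(armLen μ c : ℤ) - 1)
        + Xm (-(legLen μ c : ℤ) - 1, (armLen μ c : ℤ)))]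
    rw [← Finset.sum_add_distrib]
    apply Finset.sum_congr rfl
    intro i hi
    rw [← Finset.sum_add_distrib]
    apply Finset.sum_congr rfl
    intro j hj
    rw [Finset.mem_range] at hi hj
    have hm : (i, j) ∈ μ := YoungDiagram.mem_iff_lt_rowLen.mpr hj
    have hcl : i < μ.colLen j := YoungDiagram.mem_iff_lt_colLen.mp hm
    have h1 := FmuAux.legLen_eq μ i j
    have h2 := FmuAux.armLen_eq μ i j
    congr 1
    · exact FmuAux.Xm_pair (by omega) (by omega)
    · exact FmuAux.Xm_pair (by omega) (by omega)
  rw [h3, h4, hRHS]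
  linear_combination FmuAux.hT1 μ + FmuAux.hT4 μ - FmuAux.hT2 μ - FmuAux.hT3 μ + FmuAux.hH μ


end
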